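/- Let D be a probability distribution over linear maps on 2^n×2^n complex matrices. Then D is Pauli-invariant if and only if for all P, Q ∈ P_n with P ≠ Q: E_{C∼D}[C(P) ⊗ C(Q)] = 0. In that case, for every Hermitian observable O = Σ_{P∈P_n} a_P P: E_{C∼D}[C(O) ⊗ C(O)] = Σ_{P∈P_n} a_P² · E_{C∼D}[C(P) ⊗ C(P)]. -/

import Mathlib

open scoped Kronecker
open Matrix
open scoped ComplexOrder

noncomputable section

abbrev QMat := Matrix (Fin 2) (Fin 2) ℂ

abbrev NMat (n : ℕ) := Matrix (Fin n → Fin 2) (Fin n → Fin 2) ℂ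

/-- The four single-qubit Pauli matrices `I, X, Y, Z`. -/
def pauli : Fin 4 → QMat :=
  ![1, !![0, 1; 1, 0], !![0, -Complex.I; Complex.I, 0], !![1, 0; 0, -1]]

/-- The non-identity Paulis `X, Y, Z`. -/
def pauliXYZ (i : Fin 3) : QMat := pauli i.succ

/-- The `n`-qubit Pauli string indexed by `s : Fin n → Fin 4`. -/
def pauliString {n : ℕ} (s : Fin n → Fin 4) : NMat n :=
  Matrix.of fun i j => ∏ k, pauli (s k) (i k) (j k)

/-- Support of a Pauli string. -/
def psupp {n : ℕ} (s : Fin n → Fin 4) : Finset (Fin n) :=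
  Finset.univ.filter fun k => s k ≠ 0

/-- The observable with real Pauli coefficients `a`. -/
def obsOf {n : ℕ} (a : (Fin n → Fin 4) → ℝ) : NMat n :=
  ∑ s : Fin n → Fin 4, (a s : ℂ) • pauliString s

/-- Normalized Frobenius norm squared, `‖M‖_F² = Tr[Mᴴ M]/dim`. -/
def frobSq {m : Type*} [Fintype m] (M : Matrix m m ℂ) : ℝ :=
  (Matrix.trace (Mᴴ * M)).re / (Fintype.card m : ℝ)

def IsUnitary {m : Type*} [Fintype m] [DecidableEq m] (U : Matrix m m ℂ) : Prop :=
  U * Uᴴ = 1 ∧ Uᴴ * U = 1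

/-- Hilbert–Schmidt adjoint of a (linear) map on matrices:
`Φ†(A) i j = conj (Tr[Aᴴ Φ(E_{ij})])`. -/
def hsAdj {m : Type*} [Fintype m] [DecidableEq m]
    (Φ : Matrix m m ℂ → Matrix m m ℂ) (A : Matrix m m ℂ) : Matrix m m ℂ :=
  Matrix.of fun i j => (starRingEnd ℂ) (Matrix.trace (Aᴴ * Φ (Matrix.single i j 1)))

/-- Pauli transfer matrix entry of a single-qubit map. -/
def ptm (Φ : QMat → QMat) (a b : Fin 4) : ℂ :=
  Matrix.trace (pauli a * Φ (pauli b)) / 2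

/-- Tensor product `Φ 0 ⊗ Φ 1 ⊗ ⋯ ⊗ Φ (n-1)` of single-qubit (linear) maps,
defined via the Pauli transfer matrices. -/
def tensorMap {n : ℕ} (Φ : Fin n → QMat → QMat) (M : NMat n) : NMat n :=
  ∑ s : Fin n → Fin 4, ∑ t : Fin n → Fin 4,
    ((∏ k, ptm (Φ k) (s k) (t k)) * (Matrix.trace (pauliString t * M) / ((2 : ℂ) ^ n))) •
      pauliString s

/-- `n`-fold tensor power `Φ^{⊗n}` of a single-qubit (linear) map. -/
def tensorPow (n : ℕ) (Φ : QMat → QMat) : NMat n → NMat n :=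
  tensorMap fun _ => Φ

/-- Tensor product of `n` single-qubit matrices. -/
def qprod {n : ℕ} (V : Fin n → QMat) : NMat n :=
  Matrix.of fun i j => ∏ k, V k (i k) (j k)

/-- The single-qubit normal-form map `N'` with parameters `(D, t)`:
`N'(I) = I + Σ t_i σ_i` and `N'(σ_i) = D_i σ_i`. -/
def normalForm (D t : Fin 3 → ℝ) (M : QMat) : QMat :=
  (Matrix.trace M / 2) • (1 + ∑ i, (t i : ℂ) • pauliXYZ i) +
    ∑ i, ((D i : ℂ) * (Matrix.trace (pauliXYZ i * M) / 2)) • pauliXYZ i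

/-- `Υ(D,t) = max_{‖a‖₂=1} Σ_i a_i² D_i² + (Σ_i a_i t_i)²`. -/
def Upsilon (D t : Fin 3 → ℝ) : ℝ :=
  sSup { r : ℝ | ∃ a : Fin 3 → ℝ, (∑ i, a i ^ 2) = 1 ∧
    r = (∑ i, a i ^ 2 * D i ^ 2) + (∑ i, a i * t i) ^ 2 }

/-- Choi matrix of a single-qubit map. -/
def choi (Φ : QMat → QMat) : Matrix (Fin 2 × Fin 2) (Fin 2 × Fin 2) ℂ :=
  Matrix.of fun p q => Φ (Matrix.single p.1 q.1 1) p.2 q.2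

/-- A single-qubit quantum channel: linear, trace preserving, completely positive. -/
structure IsChannel (Φ : QMat → QMat) : Prop where
  linear : IsLinearMap ℂ Φ
  tracePreserving : ∀ M, Matrix.trace (Φ M) = Matrix.trace M
  completelyPositive : (choi Φ).PosSemidef

/-- Unitary 1-design (finitely supported distribution). -/
def IsOneDesign {ι : Type*} [Fintype ι] (w : ι → ℝ) (W : ι → QMat) : Prop :=
  ∀ M : QMat, ∑ i, (w i : ℂ) • (W i * M * (W i)ᴴ) = (Matrix.trace M / 2) • (1 : QMat)

/-- The swap (flip) operator on two qubits. -/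
def swapOp : Matrix (Fin 2 × Fin 2) (Fin 2 × Fin 2) ℂ :=
  Matrix.of fun p q => if p.1 = q.2 ∧ p.2 = q.1 then 1 else 0

/-- Unitary 2-design: the twirl of any `M` matches the Haar value
`c_I • 1 + c_F • F` (closed form of the Haar average on `U(2)`). -/
def IsTwoDesign {ι : Type*} [Fintype ι] (w : ι → ℝ) (W : ι → QMat) : Prop :=
  ∀ M : Matrix (Fin 2 × Fin 2) (Fin 2 × Fin 2) ℂ,
    ∑ i, (w i : ℂ) • ((W i ⊗ₖ W i) * M * (W i ⊗ₖ W i)ᴴ) =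
      ((Matrix.trace M - Matrix.trace (swapOp * M) / 2) / 3) •
          (1 : Matrix (Fin 2 × Fin 2) (Fin 2 × Fin 2) ℂ) +
        ((Matrix.trace (swapOp * M) - Matrix.trace M / 2) / 3) • swapOp

/-- `η`-approximate scrambler (finitely supported distribution over `U(2)`). -/
def IsApproxScrambler {ι : Type*} [Fintype ι] (η : ℝ) (w : ι → ℝ) (U : ι → QMat) : Prop :=
  (∀ a b : Fin 4, a ≠ b →
      ∑ i, (w i : ℂ) • (((U i)ᴴ * pauli a * U i) ⊗ₖ ((U i)ᴴ * pauli b * U i)) = 0) ∧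
    ∀ a b : Fin 3,
      ∑ i, w i * ((Matrix.trace (pauliXYZ a * U i * pauliXYZ b * (U i)ᴴ)).re / 2) ^ 2 ≤
        (1 + 2 * η) / 3

/-- Locally unbiased distribution over linear maps on `n`-qubit matrices. -/
def LocallyUnbiased (n : ℕ) {ι : Type*} [Fintype ι] (w : ι → ℝ)
    (C : ι → NMat n → NMat n) : Prop :=
  ∃ (m : ℕ) (v : Fin n → Fin m → ℝ) (W : Fin n → Fin m → QMat),
    (∀ j k, 0 ≤ v j k) ∧ (∀ j, ∑ k, v j k = 1) ∧ (∀ j k, IsUnitary (W j k)) ∧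
      (∀ j, IsOneDesign (v j) (W j)) ∧
      ∀ A B : NMat n,
        ∑ i, (w i : ℂ) • (C i A ⊗ₖ C i B) =
          ∑ i, ∑ f : Fin n → Fin m,
            ((w i * ∏ j, v j (f j) : ℝ) : ℂ) •
              (C i (qprod (fun j => W j (f j)) * A * (qprod fun j => W j (f j))ᴴ) ⊗ₖ
                C i (qprod (fun j => W j (f j)) * B * (qprod fun j => W j (f j))ᴴ))

/-- Pauli-invariant distribution over linear maps on `n`-qubit matrices. -/
def PauliInvariant (n : ℕ) {ι : Type*} [Fintype ι] (w : ι → ℝ)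
    (C : ι → NMat n → NMat n) : Prop :=
  ∀ A B : NMat n,
    ∑ i, (w i : ℂ) • (C i A ⊗ₖ C i B) =
      ((4 : ℂ) ^ n)⁻¹ • ∑ r : Fin n → Fin 4, ∑ i, (w i : ℂ) •
        (C i (pauliString r * A * pauliString r) ⊗ₖ C i (pauliString r * B * pauliString r))

/-- Fourier coefficient `Φ_γ(C) = Π_j 2^{-n} Tr[P_j C_j(P_{j-1})]` of a Pauli path. -/
def pathCoeff {n L : ℕ} (Cs : Fin L → NMat n → NMat n)
    (γ : Fin (L + 1) → Fin n → Fin 4) : ℂ :=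
  ∏ j : Fin L,
    (Matrix.trace (pauliString (γ j.succ) * Cs j (pauliString (γ j.castSucc))) / ((2 : ℂ) ^ n))

/-- Path weight `|γ| = Σ_{j=1}^L |P_j|`. -/
def pathWeight {n L : ℕ} (γ : Fin (L + 1) → Fin n → Fin 4) : ℕ :=
  ∑ j : Fin L, (psupp (γ j.succ)).card

/-- The (non-physical) map `Ñ_p` with `Ñ_p(I) = (N(I) - pI)/(1-p)` and
`Ñ_p(σ) = N(σ)/(1-p)` for `σ ∈ {X,Y,Z}`. -/
def tildeMap (N : QMat → QMat) (p : ℝ) (M : QMat) : QMat :=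
  (Matrix.trace M / 2) • (((1 : ℂ) - (p : ℂ))⁻¹ • (N 1 - (p : ℂ) • (1 : QMat))) +
    ∑ i : Fin 3, (Matrix.trace (pauliXYZ i * M) / 2) • (((1 : ℂ) - (p : ℂ))⁻¹ • N (pauliXYZ i))

/-- The layers of an `L`-layered noisy circuit: `C_j(ρ) = N^{⊗n}(U_j ρ U_j†)` for `j < L`,
and the last layer is followed by the single-qubit layer `V`. -/
def layerMaps {n L : ℕ} (Nm : QMat → QMat) (U : Fin L → NMat n) (Vt : NMat n)
    (j : Fin L) (ρ : NMat n) : NMat n :=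
  if j.val = L - 1 then Vt * tensorPow n Nm (U j * ρ * (U j)ᴴ) * Vtᴴ
  else tensorPow n Nm (U j * ρ * (U j)ᴴ)

/-- Composition `C_L ∘ ⋯ ∘ C_1` of the layers. -/
def circuitOf {n L : ℕ} (lm : Fin L → NMat n → NMat n) (ρ : NMat n) : NMat n :=
  (List.finRange L).foldl (fun σ j => lm j σ) ρ

/-- Operator (spectral) norm of a matrix, as the `ℓ²→ℓ²` operator norm. -/
def specNorm {m : Type*} [Fintype m] (M : Matrix m m ℂ) : ℝ :=
  Real.sqrt (sSup { r : ℝ | ∃ v : m → ℂ,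
    (∑ x, Complex.normSq (v x)) = 1 ∧ r = ∑ x, Complex.normSq (M.mulVec v x) })

/-- Trace norm `‖M‖₁ = Tr √(Mᴴ M)` (sum of singular values). -/
def traceNorm {m : Type*} [Fintype m] [DecidableEq m] (M : Matrix m m ℂ) : ℝ :=
  (Matrix.trace
    ((Matrix.posSemidef_conjTranspose_mul_self M).1.eigenvectorUnitary.1 *
      Matrix.diagonal (((↑) : ℝ → ℂ) ∘ (√·) ∘ (Matrix.posSemidef_conjTranspose_mul_self M).1.eigenvalues) *
      (star (Matrix.posSemidef_conjTranspose_mul_self M).1.eigenvectorUnitary : Matrix m m ℂ))).re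


/-! ### Auxiliary lemmas for `stmt_9` -/

def sgn (a b : Fin 4) : ℂ := if a = 0 ∨ b = 0 ∨ a = b then 1 else -1

lemma pauli_conj' (a b : Fin 4) : pauli a * pauli b * pauli a = sgn a b • pauli b := by
  fin_cases a <;> fin_cases b <;>
    · ext i j
      fin_cases i <;> fin_cases j <;>
        simp [pauli, sgn, Matrix.mul_apply, Fin.sum_univ_two, Complex.I_mul_I]

lemma pauli_entry_orth (x y i j : Fin 2) :
    ∑ a : Fin 4, pauli a x y * pauli a i j = if x = j ∧ y = i then 2 else 0 := by
  fin_cases x <;> fin_cases y <;> fin_cases i <;> fin_cases j <;>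
    · first
      | (simp [pauli, Fin.sum_univ_four, Complex.I_mul_I]; norm_num)
      | simp [pauli, Fin.sum_univ_four, Complex.I_mul_I]

lemma sgn_orth (b c : Fin 4) : ∑ a : Fin 4, sgn a b * sgn a c = if b = c then 4 else 0 := by
  fin_cases b <;> fin_cases c <;> simp [sgn, Fin.sum_univ_four] <;> norm_num

lemma sgn_mul_self (a b : Fin 4) : sgn a b * sgn a b = 1 := by
  unfold sgn; split <;> norm_num

def qp {n : ℕ} (V : Fin n → QMat) : NMat n := Matrix.of fun i j => ∏ k, V k (i k) (j k)

lemma pauliString_eq_qp {n : ℕ} (s : Fin n → Fin 4) :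
    pauliString s = qp (fun k => pauli (s k)) := rfl

lemma qp_mul {n : ℕ} (V W : Fin n → QMat) : qp V * qp W = qp (fun k => V k * W k) := by
  ext i j
  simp only [Matrix.mul_apply, qp, Matrix.of_apply]
  rw [Fintype.prod_sum (fun k b => V k (i k) b * W k b (j k))]
  exact Finset.sum_congr rfl fun m _ => Finset.prod_mul_distrib.symm

lemma qp_smul {n : ℕ} (c : Fin n → ℂ) (V : Fin n → QMat) :
    qp (fun k => c k • V k) = (∏ k, c k) • qp V := by
  ext i j
  simp only [qp, Matrix.of_apply, Matrix.smul_apply, smul_eq_mul, ← Finset.prod_mul_distrib]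

lemma pauliString_conj' {n : ℕ} (r s : Fin n → Fin 4) :
    pauliString r * pauliString s * pauliString r =
      (∏ k, sgn (r k) (s k)) • pauliString s := by
  simp only [pauliString_eq_qp, qp_mul]
  rw [show (fun k => pauli (r k) * pauli (s k) * pauli (r k)) =
        (fun k => sgn (r k) (s k) • pauli (s k)) from funext fun k => pauli_conj' _ _, qp_smul]

lemma string_entry_orth {n : ℕ} (x y i j : Fin n → Fin 2) :
    ∑ s : Fin n → Fin 4, pauliString s x y * pauliString s i j =
      if x = j ∧ y = i then (2:ℂ)^n else 0 := by
  simp only [pauliString, Matrix.of_apply, ← Finset.prod_mul_distrib]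
  rw [← Fintype.prod_sum (fun k a => pauli a (x k) (y k) * pauli a (i k) (j k))]
  by_cases h : x = j ∧ y = i
  · simp [h.1, h.2, pauli_entry_orth]
  · rw [if_neg h]
    obtain ⟨k, hk⟩ : ∃ k, ¬ (x k = j k ∧ y k = i k) := by
      by_contra hc; push_neg at hc
      exact h ⟨funext fun k => (hc k).1, funext fun k => (hc k).2⟩
    refine Finset.prod_eq_zero (Finset.mem_univ k) ?_
    rw [pauli_entry_orth, if_neg hk]

lemma pauli_expand {n : ℕ} (M : NMat n) :
    M = ∑ s : Fin n → Fin 4,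
      (Matrix.trace (pauliString s * M) / (2:ℂ)^n) • pauliString s := by
  have h2 : ((2:ℂ)^n) ≠ 0 := pow_ne_zero _ two_ne_zero
  ext i j
  symm
  rw [Matrix.sum_apply]
  calc ∑ s : Fin n → Fin 4,
        ((Matrix.trace (pauliString s * M) / (2:ℂ)^n) • pauliString s) i j
      = ∑ s : Fin n → Fin 4, ∑ x, ∑ y,
          pauliString s x y * M y x * pauliString s i j / (2:ℂ)^n := by
        refine Finset.sum_congr rfl fun s _ => ?_
        rw [Matrix.smul_apply, smul_eq_mul, Matrix.trace]
        simp only [Matrix.diag_apply, Matrix.mul_apply, Finset.sum_div, Finset.sum_mul,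
          div_mul_eq_mul_div]
    _ = ∑ x, ∑ y, (∑ s : Fin n → Fin 4, pauliString s x y * pauliString s i j)
          * M y x / (2:ℂ)^n := by
        rw [Finset.sum_comm]
        refine Finset.sum_congr rfl fun x _ => ?_
        rw [Finset.sum_comm]
        refine Finset.sum_congr rfl fun y _ => ?_
        rw [Finset.sum_mul, Finset.sum_div]
        exact Finset.sum_congr rfl fun s _ => by ring
    _ = ∑ x, ∑ y, (if x = j ∧ y = i then (2:ℂ)^n else 0) * M y x / (2:ℂ)^n := by
        simp only [string_entry_orth]
    _ = M i j := by
        simp [ite_and, ite_mul, zero_mul, apply_ite (· / (2:ℂ)^n), zero_div,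
          Finset.sum_ite_eq', h2, mul_div_assoc, mul_div_cancel_left₀]

lemma pString_orth {n : ℕ} {s t : Fin n → Fin 4} (hst : s ≠ t) :
    ∑ r : Fin n → Fin 4, (∏ k, sgn (r k) (s k)) * ∏ k, sgn (r k) (t k) = 0 := by
  have h : ∀ r : Fin n → Fin 4, (∏ k, sgn (r k) (s k)) * ∏ k, sgn (r k) (t k) =
      ∏ k, (sgn (r k) (s k) * sgn (r k) (t k)) := fun r => Finset.prod_mul_distrib.symm
  simp only [h]
  rw [← Fintype.prod_sum (fun k a => sgn a (s k) * sgn a (t k))]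
  obtain ⟨k, hk⟩ := Function.ne_iff.mp hst
  exact Finset.prod_eq_zero (Finset.mem_univ k) (by rw [sgn_orth, if_neg hk])

lemma pString_sq {n : ℕ} (r s : Fin n → Fin 4) :
    (∏ k, sgn (r k) (s k)) * ∏ k, sgn (r k) (s k) = 1 := by
  rw [← Finset.prod_mul_distrib]
  exact Finset.prod_eq_one fun k _ => sgn_mul_self _ _

def Epair {n : ℕ} {ι : Type*} [Fintype ι] (w : ι → ℝ) (C : ι → NMat n → NMat n)
    (s t : Fin n → Fin 4) :
    Matrix ((Fin n → Fin 2) × (Fin n → Fin 2)) ((Fin n → Fin 2) × (Fin n → Fin 2)) ℂ :=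
  ∑ i, (w i : ℂ) • (C i (pauliString s) ⊗ₖ C i (pauliString t))

lemma Epair_def {n : ℕ} {ι : Type*} [Fintype ι] (w : ι → ℝ) (C : ι → NMat n → NMat n)
    (s t : Fin n → Fin 4) :
    Epair w C s t = ∑ i, (w i : ℂ) • (C i (pauliString s) ⊗ₖ C i (pauliString t)) := rfl

lemma kron_expand {σ τ d₁ d₂ : Type*} [Fintype σ] [Fintype τ] (c : σ → ℂ) (d : τ → ℂ)
    (X : σ → Matrix d₁ d₁ ℂ) (Y : τ → Matrix d₂ d₂ ℂ) :
    (∑ s, c s • X s) ⊗ₖ (∑ t, d t • Y t) = ∑ s, ∑ t, (c s * d t) • (X s ⊗ₖ Y t) := by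
  ext ⟨i, p⟩ ⟨j, q⟩
  simp only [Matrix.kroneckerMap_apply, Matrix.sum_apply, Matrix.smul_apply, smul_eq_mul]
  rw [Finset.sum_mul_sum]
  exact Finset.sum_congr rfl fun s _ => Finset.sum_congr rfl fun t _ => by ring

lemma conj_smul_sum {n : ℕ} (r : Fin n → Fin 4) (c : (Fin n → Fin 4) → ℂ) :
    pauliString r * (∑ s, c s • pauliString s) * pauliString r =
      ∑ s, ((∏ k, sgn (r k) (s k)) * c s) • pauliString s := by
  rw [Finset.mul_sum, Finset.sum_mul]
  refine Finset.sum_congr rfl fun s _ => ?_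
  rw [mul_smul_comm, smul_mul_assoc, pauliString_conj', smul_smul, mul_comm]

lemma master {n : ℕ} {ι : Type*} [Fintype ι] (w : ι → ℝ) (C : ι → NMat n → NMat n)
    (hlin : ∀ i, IsLinearMap ℂ (C i)) (c d : (Fin n → Fin 4) → ℂ) :
    ∑ i, (w i : ℂ) • (C i (∑ s, c s • pauliString s) ⊗ₖ C i (∑ t, d t • pauliString t)) =
      ∑ s, ∑ t, (c s * d t) • Epair w C s t := by
  have hC : ∀ i (c : (Fin n → Fin 4) → ℂ),
      C i (∑ s, c s • pauliString s) = ∑ s, c s • C i (pauliString s) := by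
    intro i c
    rw [show C i = ⇑(IsLinearMap.mk' (C i) (hlin i)) from rfl, map_sum]
    exact Finset.sum_congr rfl fun s _ => _root_.map_smul _ _ _
  calc ∑ i, (w i : ℂ) • (C i (∑ s, c s • pauliString s) ⊗ₖ C i (∑ t, d t • pauliString t))
      = ∑ i, (w i : ℂ) • ∑ s, ∑ t, (c s * d t) •
          (C i (pauliString s) ⊗ₖ C i (pauliString t)) := by
        refine Finset.sum_congr rfl fun i _ => ?_
        rw [hC, hC, kron_expand]
    _ = _ := by
        simp only [Epair_def, Finset.smul_sum]
        rw [Finset.sum_comm]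
        refine Finset.sum_congr rfl fun s _ => ?_
        rw [Finset.sum_comm]
        exact Finset.sum_congr rfl fun t _ => Finset.sum_congr rfl fun i _ => smul_comm _ _ _


/-- (Orthogonality for Pauli-invariant distributions.) `D` is
Pauli-invariant iff `E_C[C(P) ⊗ C(Q)] = 0` for all distinct Paulis `P ≠ Q`; in that case
the two-fold twirl of any observable splits as a sum over Pauli strings. -/
theorem stmt_9 (n : ℕ) {ι : Type*} [Fintype ι] (w : ι → ℝ)
    (C : ι → NMat n → NMat n)
    (hw0 : ∀ i, 0 ≤ w i) (hw1 : ∑ i, w i = 1)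
    (hlin : ∀ i, IsLinearMap ℂ (C i)) :
    (PauliInvariant n w C ↔
      ∀ s s' : Fin n → Fin 4, s ≠ s' →
        ∑ i, (w i : ℂ) • (C i (pauliString s) ⊗ₖ C i (pauliString s')) = 0) ∧
    (PauliInvariant n w C →
      ∀ a : (Fin n → Fin 4) → ℝ,
        ∑ i, (w i : ℂ) • (C i (obsOf a) ⊗ₖ C i (obsOf a)) =
          ∑ s : Fin n → Fin 4, (a s : ℂ) ^ 2 •
            ∑ i, (w i : ℂ) • (C i (pauliString s) ⊗ₖ C i (pauliString s))) := by
  have h4 : ((4:ℂ)^n) ≠ 0 := pow_ne_zero _ (by norm_num)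
  have hcard : ∀ X : Matrix ((Fin n → Fin 2) × (Fin n → Fin 2))
      ((Fin n → Fin 2) × (Fin n → Fin 2)) ℂ,
      (∑ _r : Fin n → Fin 4, X) = (4:ℂ)^n • X := by
    intro X
    rw [Finset.sum_const, Finset.card_univ, Fintype.card_fun, Fintype.card_fin,
      Fintype.card_fin, ← Nat.cast_smul_eq_nsmul ℂ]
    norm_num
  have hconj : ∀ (cA cB : (Fin n → Fin 4) → ℂ) (r : Fin n → Fin 4),
      ∑ i, (w i : ℂ) •
        (C i (pauliString r * (∑ s, cA s • pauliString s) * pauliString r) ⊗ₖ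
         C i (pauliString r * (∑ t, cB t • pauliString t) * pauliString r)) =
      ∑ s, ∑ t, ((∏ k, sgn (r k) (s k)) * cA s * ((∏ k, sgn (r k) (t k)) * cB t)) •
        Epair w C s t := by
    intro cA cB r
    rw [conj_smul_sum, conj_smul_sum, master w C hlin]
  have hfwd : PauliInvariant n w C → ∀ s t : Fin n → Fin 4, s ≠ t → Epair w C s t = 0 := by
    intro h s t hst
    have hs := h (pauliString s) (pauliString t)
    have key : (∑ r : Fin n → Fin 4, ∑ i, (w i : ℂ) •
        (C i (pauliString r * pauliString s * pauliString r) ⊗ₖ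
         C i (pauliString r * pauliString t * pauliString r))) =
        (∑ r : Fin n → Fin 4, (∏ k, sgn (r k) (s k)) * ∏ k, sgn (r k) (t k)) •
          Epair w C s t := by
      rw [Finset.sum_smul]
      refine Finset.sum_congr rfl fun r _ => ?_
      calc ∑ i, (w i : ℂ) •
            (C i (pauliString r * pauliString s * pauliString r) ⊗ₖ
             C i (pauliString r * pauliString t * pauliString r))
          = ∑ i, ((∏ k, sgn (r k) (s k)) * ∏ k, sgn (r k) (t k)) •
              ((w i : ℂ) • (C i (pauliString s) ⊗ₖ C i (pauliString t))) := by
            refine Finset.sum_congr rfl fun i _ => ?_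
            rw [pauliString_conj', pauliString_conj', (hlin i).map_smul, (hlin i).map_smul,
              Matrix.smul_kronecker, Matrix.kronecker_smul]
            simp only [smul_smul]
            congr 1
            ring
        _ = _ := (Finset.smul_sum).symm
    rw [Epair_def, hs, key, pString_orth hst, zero_smul, smul_zero]
  refine ⟨⟨fun h s t hst => (Epair_def w C s t) ▸ hfwd h s t hst, fun h0 => ?_⟩,
    fun h a => ?_⟩
  · have hoff : ∀ s t : Fin n → Fin 4, s ≠ t → Epair w C s t = 0 := by
      intro s t hst; rw [Epair_def]; exact h0 s t hst
    intro A B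
    set cA : (Fin n → Fin 4) → ℂ :=
      fun s => Matrix.trace (pauliString s * A) / (2:ℂ)^n with hcA
    set cB : (Fin n → Fin 4) → ℂ :=
      fun s => Matrix.trace (pauliString s * B) / (2:ℂ)^n with hcB
    have hA : A = ∑ s, cA s • pauliString s := pauli_expand A
    have hB : B = ∑ s, cB s • pauliString s := pauli_expand B
    have hdiag : ∀ (u v : (Fin n → Fin 4) → ℂ),
        (∑ s, ∑ t, (u s * v t) • Epair w C s t) = ∑ s, (u s * v s) • Epair w C s s := by
      intro u v
      refine Finset.sum_congr rfl fun s _ => ?_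
      exact Finset.sum_eq_single s (fun t _ hts => by rw [hoff s t (Ne.symm hts), smul_zero])
        (fun hs => absurd (Finset.mem_univ s) hs)
    have hL : ∑ i, (w i : ℂ) • (C i A ⊗ₖ C i B) = ∑ s, (cA s * cB s) • Epair w C s s := by
      conv_lhs => rw [hA, hB]
      rw [master w C hlin cA cB, hdiag]
    have hR : ∀ r : Fin n → Fin 4,
        ∑ i, (w i : ℂ) •
          (C i (pauliString r * A * pauliString r) ⊗ₖ
           C i (pauliString r * B * pauliString r)) =
          ∑ s, (cA s * cB s) • Epair w C s s := by
      intro r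
      conv_lhs => rw [hA, hB]
      rw [hconj cA cB r, hdiag]
      refine Finset.sum_congr rfl fun s _ => ?_
      congr 1
      calc (∏ k, sgn (r k) (s k)) * cA s * ((∏ k, sgn (r k) (s k)) * cB s)
          = ((∏ k, sgn (r k) (s k)) * ∏ k, sgn (r k) (s k)) * (cA s * cB s) := by ring
        _ = cA s * cB s := by rw [pString_sq, one_mul]
    rw [hL, show (∑ r : Fin n → Fin 4, ∑ i, (w i : ℂ) •
          (C i (pauliString r * A * pauliString r) ⊗ₖ
           C i (pauliString r * B * pauliString r))) =
        (4:ℂ)^n • ∑ s, (cA s * cB s) • Epair w C s s from by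
      rw [Finset.sum_congr rfl fun r _ => hR r]; exact hcard _]
    rw [smul_smul, inv_mul_cancel₀ h4, one_smul]
  · have hoff := hfwd h
    simp only [← Epair_def w C]
    rw [show obsOf a = ∑ s, ((a s : ℂ)) • pauliString s from rfl,
      master w C hlin (fun s => (a s : ℂ)) (fun s => (a s : ℂ))]
    refine Finset.sum_congr rfl fun s _ => ?_
    rw [Finset.sum_eq_single s (fun t _ hts => by rw [hoff s t (Ne.symm hts), smul_zero])
      (fun hs => absurd (Finset.mem_univ s) hs), sq]


end
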